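/- arXiv:1604.07613 — 6 statements merged into one kernel-verified Lean document; each statement's English description precedes it below -/
import Mathlib

section
/- For multiplicative characters A, B of F_q, define the Greene binomial coefficient binom(A,B) = (B(−1)/q)·J(A, B̄), where B̄ is the inverse character of B. Then binom(A,B) = binom(A, A·B̄). -/
/-- Greene's binomial coefficient `binom(A,B) = (B(-1)/q)·J(A, B̄)`. -/
noncomputable def greeneBinom (F : Type) [Field F] [Fintype F] (A B : MulChar F ℂ) : ℂ :=
  B (-1) / (Fintype.card F : ℂ) * jacobiSum A B⁻¹

lemma key_sum (F : Type) [Field F] [Fintype F] (A B : MulChar F ℂ) :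
    B (-1) * jacobiSum A B⁻¹ = (A * B⁻¹) (-1) * jacobiSum A (A * B⁻¹)⁻¹ := by
  classical
  rw [jacobiSum, jacobiSum, Finset.mul_sum, Finset.mul_sum]
  rw [← Finset.sum_erase (Finset.univ) (a := (1:F))
        (by simp [MulChar.map_nonunit B⁻¹ not_isUnit_zero]),
      ← Finset.sum_erase (Finset.univ) (a := (1:F))
        (f := fun x => (A * B⁻¹) (-1) * (A x * (A * B⁻¹)⁻¹ (1 - x)))
        (by show (A * B⁻¹) (-1) * (A 1 * (A * B⁻¹)⁻¹ ((1:F) - 1)) = 0; rw [sub_self, MulChar.map_nonunit (A * B⁻¹)⁻¹ not_isUnit_zero, mul_zero, mul_zero])]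
  refine Finset.sum_nbij' (fun x => x / (x - 1)) (fun x => x / (x - 1)) ?_ ?_ ?_ ?_ ?_
  · intro a ha
    simp only [Finset.mem_erase, Finset.mem_univ, and_true] at ha ⊢
    intro h
    have hu : a - 1 ≠ 0 := sub_ne_zero.mpr ha
    field_simp at h
    exact one_ne_zero (by linear_combination h : (1:F) = 0)
  · intro a ha
    simp only [Finset.mem_erase, Finset.mem_univ, and_true] at ha ⊢
    intro h
    have hu : a - 1 ≠ 0 := sub_ne_zero.mpr ha
    field_simp at h
    exact one_ne_zero (by linear_combination h : (1:F) = 0)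
  · intro a ha
    simp only [Finset.mem_erase, Finset.mem_univ, and_true] at ha
    have hu : a - 1 ≠ 0 := sub_ne_zero.mpr ha
    have h2 : a / (a - 1) - 1 ≠ 0 := by
      intro h
      rw [sub_eq_zero, div_eq_one_iff_eq hu] at h
      exact one_ne_zero (by linear_combination h : (1:F) = 0)
    show a / (a - 1) / (a / (a - 1) - 1) = a
    field_simp
    ring
  · intro a ha
    simp only [Finset.mem_erase, Finset.mem_univ, and_true] at ha
    have hu : a - 1 ≠ 0 := sub_ne_zero.mpr ha
    have h2 : a / (a - 1) - 1 ≠ 0 := by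
      intro h
      rw [sub_eq_zero, div_eq_one_iff_eq hu] at h
      exact one_ne_zero (by linear_combination h : (1:F) = 0)
    show a / (a - 1) / (a / (a - 1) - 1) = a
    field_simp
    ring
  · intro x hx
    simp only [Finset.mem_erase, Finset.mem_univ, and_true] at hx
    have hu : x - 1 ≠ 0 := sub_ne_zero.mpr hx
    have h1x : (1 : F) - x ≠ 0 := fun h => hu (by linear_combination -h)
    rcases eq_or_ne x 0 with rfl | hx0
    · have hA0 : A (0 : F) = 0 := MulChar.map_nonunit A not_isUnit_zero
      simp [hA0]
    -- now x ≠ 0, x ≠ 1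
    show B (-1) * (A x * B⁻¹ (1 - x)) =
      (A * B⁻¹) (-1) * (A (x / (x - 1)) * (A * B⁻¹)⁻¹ (1 - x / (x - 1)))
    have e1 : x / (x - 1) = x * (x - 1)⁻¹ := div_eq_mul_inv _ _
    have e2 : (1 : F) - x / (x - 1) = ((1 : F) - x)⁻¹ := by
      field_simp
      ring
    rw [e2, e1]
    have einv : (A * B⁻¹)⁻¹ (((1 : F) - x)⁻¹) = A (1 - x) * B⁻¹ (1 - x) := by
      rw [MulChar.inv_apply', inv_inv, MulChar.mul_apply]
    rw [einv, MulChar.mul_apply, map_mul A]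
    rw [show (1 : F) - x = -1 * (x - 1) by ring]
    simp only [map_mul]
    have hBinv : B⁻¹ (-1 : F) = B (-1) := by
      rw [MulChar.inv_apply']
      norm_num
    rw [hBinv]
    have hA1 : A (-1 : F) * A (-1 : F) = 1 := by rw [← map_mul]; norm_num
    have hAx : A ((x - 1)⁻¹) * A (x - 1) = 1 := by
      rw [← map_mul, inv_mul_cancel₀ hu, map_one]
    linear_combination (-(A (-1) * A (-1) * (B (-1) * B (-1) * B⁻¹ (x - 1) * A x))) * hAx
      + (-(B (-1) * B (-1) * B⁻¹ (x - 1) * A x)) * hA1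

/-- `binom(A,B) = binom(A, A·B̄)`. -/
theorem greeneBinom_eq_self_mul_inv (F : Type) [Field F] [Fintype F]
    (A B : MulChar F ℂ) :
    greeneBinom F A B = greeneBinom F A (A * B⁻¹) := by
  unfold greeneBinom
  rw [div_mul_eq_mul_div, div_mul_eq_mul_div, key_sum]
end

section
/- For multiplicative characters A, B of F_q, the Greene binomial coefficient satisfies binom(A,B) = B(−1)·binom(B·Ā, B), where Ā is the inverse of A. -/
lemma jacobiSum_reflect_aux (F : Type) [Field F] [Fintype F] (A B : MulChar F ℂ) :
    jacobiSum A B⁻¹ = B (-1) * jacobiSum (B * A⁻¹) B⁻¹ := by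
  simp only [jacobiSum, Finset.mul_sum]
  rw [← Equiv.sum_comp (Equiv.inv F)
    (fun x => B (-1) * ((B * A⁻¹) x * B⁻¹ (1 - x)))]
  refine Finset.sum_congr rfl fun y _ => ?_
  simp only [Equiv.inv_apply]
  by_cases hy : y = 0
  · simp [hy, MulChar.map_zero]
  by_cases hy1 : y = 1
  · simp [hy1, MulChar.map_zero]
  have h1y : (1 : F) - y ≠ 0 := sub_ne_zero.mpr (Ne.symm hy1)
  have h1yi : (1 : F) - y⁻¹ ≠ 0 := by
    rw [sub_ne_zero]
    intro h
    exact hy1 (by rw [← inv_inv y, ← h, inv_one])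
  simp only [MulChar.inv_apply', MulChar.mul_apply, inv_inv]
  rw [show ((1:F) - y)⁻¹ = (-1) * y⁻¹ * ((1:F) - y⁻¹)⁻¹ by
      have hneg : (-1 : F) + y ≠ 0 := by
        rw [add_comm, ← sub_eq_add_neg]; exact sub_ne_zero.mpr hy1
      field_simp
      ring,
    map_mul, map_mul]
  ring

/-- `binom(A,B) = B(-1)·binom(B·Ā, B)`. -/
theorem greeneBinom_reflect (F : Type) [Field F] [Fintype F]
    (A B : MulChar F ℂ) :
    greeneBinom F A B = B (-1) * greeneBinom F (B * A⁻¹) B := by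
  simp only [greeneBinom]
  rw [jacobiSum_reflect_aux F A B]
  ring
end

section
/- Let A be a multiplicative character of F_q and x ∈ F_q. Then A(1+x) = δ(x) + (q/(q−1))·Σ_χ binom(A,χ)·χ(x), where the sum runs over all multiplicative characters χ of F_q, δ(0)=1 and δ(x)=0 for x ≠ 0. -/
/-- Orthogonality: the sum of `(T^m) a` over `0 ≤ m < q-1` is `q-1` if `a = 1` and `0`
otherwise, when `T` generates the character group. -/
lemma mulChar_gen_orthogonality (F : Type) [Field F] [Fintype F] [DecidableEq F]
    (T : MulChar F ℂ) (hT : ∀ χ : MulChar F ℂ, ∃ k : ℕ, χ = T ^ k) (a : F) :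
    ∑ m ∈ Finset.range (Fintype.card F - 1), (T ^ m) a
      = if a = 1 then ((Fintype.card F : ℂ) - 1) else 0 := by
  have hq2 : 1 < Fintype.card F := Fintype.one_lt_card
  by_cases ha : a = 0
  · subst ha
    rw [if_neg (by exact zero_ne_one)]
    refine Finset.sum_eq_zero fun m hm => ?_
    exact MulChar.map_nonunit _ (by simp)
  · have hu : IsUnit a := isUnit_iff_ne_zero.mpr ha
    have hpow : ∀ m : ℕ, (T ^ m) a = (T a) ^ m := by
      intro m
      rcases Nat.eq_zero_or_pos m with h | h
      · subst h; simp [MulChar.one_apply hu]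
      · exact MulChar.pow_apply' T h.ne' a
    simp_rw [hpow]
    by_cases h1 : a = 1
    · subst h1
      rw [if_pos rfl]
      simp only [map_one, one_pow, Finset.sum_const, Finset.card_range, nsmul_eq_mul, mul_one]
      rw [Nat.cast_sub hq2.le, Nat.cast_one]
    · rw [if_neg h1]
      have hz : (T a) ^ (Fintype.card F - 1) = 1 := by
        rw [← map_pow, FiniteField.pow_card_sub_one_eq_one a ha, map_one]
      have hz1 : T a ≠ 1 := by
        intro h
        haveI : NeZero ((Monoid.exponent Fˣ : ℕ) : ℂ) :=
          ⟨Nat.cast_ne_zero.mpr Monoid.exponent_ne_zero_of_finite⟩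
        obtain ⟨χ, hχ⟩ := MulChar.exists_apply_ne_one_of_hasEnoughRootsOfUnity F ℂ h1
        obtain ⟨k, rfl⟩ := hT χ
        rw [hpow k, h, one_pow] at hχ
        exact hχ rfl
      rw [geom_sum_eq hz1, hz, sub_self, zero_div]

/-- `A(1+x) = δ(x) + (q/(q-1))·Σ_χ binom(A,χ)·χ(x)`, the sum being over all
multiplicative characters `χ = T^m`, `0 ≤ m ≤ q-2`, of `F_q`. -/
theorem mulChar_one_add_expansion (F : Type) [Field F] [Fintype F] [DecidableEq F] (q : ℕ)
    (hcard : Fintype.card F = q)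
    (T : MulChar F ℂ) (hT : ∀ χ : MulChar F ℂ, ∃ k : ℕ, χ = T ^ k)
    (A : MulChar F ℂ) (x : F) :
    A (1 + x) = (if x = 0 then 1 else 0)
      + ((q : ℂ) / ((q : ℂ) - 1)) *
          ∑ m ∈ Finset.range (q - 1), greeneBinom F A (T ^ m) * (T ^ m) x := by
  subst hcard
  set q : ℕ := Fintype.card F with hq
  have hq2 : 1 < q := Fintype.one_lt_card
  have hq0 : (q : ℂ) ≠ 0 := Nat.cast_ne_zero.mpr (by omega)
  have hq1 : (q : ℂ) - 1 ≠ 0 := by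
    have : ((q - 1 : ℕ) : ℂ) ≠ 0 := Nat.cast_ne_zero.mpr (by omega)
    rwa [Nat.cast_sub hq2.le, Nat.cast_one] at this
  have key : ∀ m ∈ Finset.range (q - 1), greeneBinom F A (T ^ m) * (T ^ m) x
      = ∑ t : F, A t / (q : ℂ) * (T ^ m) (-1 * (1 - t)⁻¹ * x) := by
    intro m _
    simp only [greeneBinom, jacobiSum, Finset.sum_mul, Finset.mul_sum]
    refine Finset.sum_congr rfl fun t _ => ?_
    rw [MulChar.inv_apply', map_mul, map_mul]
    ring
  rw [Finset.sum_congr rfl key, Finset.sum_comm]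
  simp_rw [← Finset.mul_sum, show ∀ a : F, ∑ m ∈ Finset.range (q - 1), (T ^ m) a = if a = 1 then ((q : ℂ) - 1) else 0 from mulChar_gen_orthogonality F T hT]
  by_cases hx : x = 0
  · subst hx
    have : ∀ t : F, (-1 * (1 - t)⁻¹ * (0 : F) = 1) = False := by
      intro t; simp [zero_ne_one']
    simp only [this, if_false, mul_zero, Finset.sum_const, add_zero, if_pos rfl]
    simp
  · rw [if_neg hx]
    have hcond : ∀ t : F, (-1 * (1 - t)⁻¹ * x = 1) ↔ (t = 1 + x) := by
      intro t
      constructor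
      · intro h
        have ht1 : (1 : F) - t ≠ 0 := by
          intro h0
          rw [h0, inv_zero, mul_zero, zero_mul] at h
          exact zero_ne_one h
        field_simp at h
        linear_combination h
      · rintro rfl
        have : (1 : F) - (1 + x) = -x := by ring
        rw [this]
        field_simp
    have : ∑ t : F, A t / (q : ℂ) * (if -1 * (1 - t)⁻¹ * x = 1 then ((q : ℂ) - 1) else 0)
        = A (1 + x) / (q : ℂ) * ((q : ℂ) - 1) := by
      rw [Finset.sum_eq_single (1 + x)]
      · rw [if_pos ((hcond (1 + x)).mpr rfl)]
      · intro t _ ht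
        rw [if_neg (fun h => ht ((hcond t).mp h)), mul_zero]
      · intro h; exact absurd (Finset.mem_univ _) h
    rw [this]
    field_simp
    ring
end

section
/- Let F_q be a finite field, b ∈ F_q*, e a positive integer with q ≡ 1 (mod e), and θ a fixed nontrivial additive character. Then Σ_{y,z ∈ F_q*} θ(bz)·θ(−z·y^e) = 1 + q·Σ_{i=1}^{e−1} T^{−i(q−1)/e}(b), where T is a fixed generator of the character group of F_q*. -/
open Finset

private lemma sum_split_units (F : Type) [Field F] [Fintype F] [DecidableEq F]
    (f : F → ℂ) : ∑ x : F, f x = f 0 + ∑ z : Fˣ, f z := by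
  have h1 : ∑ z : Fˣ, f ↑z = ∑ a : {x : F // x ≠ 0}, f ↑a :=
    Fintype.sum_equiv unitsEquivNeZero _ _ (fun z => by simp)
  have h2 : ∑ a : {x : F // x ≠ 0}, f ↑a = ∑ x ∈ univ.filter (fun x => x ≠ 0), f x :=
    (Finset.sum_subtype _ (by simp) f).symm
  rw [h1, h2, ← Finset.sum_filter_add_sum_filter_not univ (fun x => x = 0) f]
  congr 1
  rw [Finset.filter_eq']
  simp

/-- Evaluation of the character sum `B = Σ_{y,z ∈ F_q^*} θ(bz)θ(-z y^e)`:
it equals `1 + q·Σ_{i=1}^{e-1} T^{-i(q-1)/e}(b)`. -/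
theorem sum_B_eval (F : Type) [Field F] [Fintype F] [DecidableEq F] (q : ℕ)
    (hcard : Fintype.card F = q)
    (ψ : AddChar F ℂ) (hψ : ψ ≠ 1)
    (T : MulChar F ℂ) (hT : ∀ χ : MulChar F ℂ, ∃ k : ℕ, χ = T ^ k)
    (e : ℕ) (he : 0 < e) (hqe : e ∣ q - 1)
    (b : F) (hb : b ≠ 0) :
    ∑ y : Fˣ, ∑ z : Fˣ, ψ (b * z) * ψ (-(z * (y : F) ^ e))
      = 1 + (q : ℂ) * ∑ i ∈ Finset.Icc 1 (e - 1), ((T ^ (i * ((q - 1) / e)))⁻¹ : MulChar F ℂ) b := by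
  classical
  have hq2 : 1 < q := hcard ▸ Fintype.one_lt_card
  have hq1 : Fintype.card Fˣ = q - 1 := by rw [Fintype.card_units, hcard]
  set d : ℕ := (q - 1) / e with hd
  have hed : e * d = q - 1 := Nat.mul_div_cancel' hqe
  have hdpos : 0 < d := by
    rcases Nat.eq_zero_or_pos d with h | h
    · rw [h, mul_zero] at hed; omega
    · exact h
  set u : Fˣ := Units.mk0 b hb with hu
  have hbu : (u : F) = b := rfl
  have hprim : ψ.IsPrimitive := AddChar.IsPrimitive.of_ne_one hψ
  have hinner : ∀ c : F, ∑ z : Fˣ, ψ (c * z) = (if c = 0 then (q : ℂ) else 0) - 1 := by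
    intro c
    have h := sum_split_units F (fun x => ψ (c * x))
    have h2 : ∑ x : F, ψ (c * x) = if c = 0 then (q : ℂ) else 0 := by
      have h3 := AddChar.sum_mulShift c hprim
      rw [hcard] at h3
      simpa [mul_comm] using h3
    simp only [mul_zero, AddChar.map_zero_eq_one] at h
    rw [h2] at h
    rw [h]; ring
  have hfilter : ∀ y : Fˣ, (b - (y : F) ^ e = 0) ↔ (y ^ e = u) := by
    intro y
    rw [sub_eq_zero, eq_comm, Units.ext_iff, Units.val_pow_eq_pow_val, hbu]
  have step1 : ∑ y : Fˣ, ∑ z : Fˣ, ψ (b * z) * ψ (-(z * (y : F) ^ e))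
      = ∑ y : Fˣ, ((if y ^ e = u then (q : ℂ) else 0) - 1) := by
    refine Finset.sum_congr rfl fun y _ => ?_
    have : ∑ z : Fˣ, ψ (b * z) * ψ (-(z * (y : F) ^ e))
        = ∑ z : Fˣ, ψ ((b - (y : F) ^ e) * z) := by
      refine Finset.sum_congr rfl fun z _ => ?_
      rw [← AddChar.map_add_eq_mul]
      congr 1
      ring
    rw [this, hinner (b - (y : F) ^ e), if_congr (hfilter y) rfl rfl]
  set N : ℕ := (univ.filter (fun y : Fˣ => y ^ e = u)).card with hN
  have step2 : ∑ y : Fˣ, ((if y ^ e = u then (q : ℂ) else 0) - 1)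
      = (N : ℂ) * q - ((q : ℂ) - 1) := by
    rw [Finset.sum_sub_distrib, ← Finset.sum_filter, Finset.sum_const, Finset.sum_const,
      Finset.card_univ, hq1, nsmul_eq_mul, nsmul_eq_mul, mul_one,
      Nat.cast_sub (by omega : 1 ≤ q), Nat.cast_one]
  have hTb_pow : T b ^ (q - 1) = 1 := by
    rw [← map_pow, ← hbu, ← Units.val_pow_eq_pow_val, ← hq1, pow_card_eq_one, Units.val_one,
      map_one]
  by_cases hcase : ∃ c : Fˣ, c ^ e = u
  · obtain ⟨c, hc⟩ := hcase
    haveI : NeZero e := ⟨he.ne'⟩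
    obtain ⟨g, hg⟩ := IsCyclic.exists_generator (α := Fˣ)
    have hog : orderOf g = q - 1 := by
      rw [orderOf_eq_card_of_forall_mem_zpowers hg, Nat.card_eq_fintype_card, hq1]
    have hζ : orderOf (g ^ d) = e := by
      rw [orderOf_pow' _ hdpos.ne', hog,
        Nat.gcd_eq_right ⟨e, by rw [mul_comm]; exact hed.symm⟩, ← hed,
        Nat.mul_div_cancel _ hdpos]
    have hprimroot : IsPrimitiveRoot ((g ^ d : Fˣ) : F) e := by
      rw [← hζ]
      exact (IsPrimitiveRoot.coe_units_iff).mpr (IsPrimitiveRoot.orderOf _)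
    have hroots : (univ.filter (fun t : Fˣ => t ^ e = 1)).card = e := by
      calc (univ.filter (fun t : Fˣ => t ^ e = 1)).card
          = Fintype.card {t : Fˣ // t ^ e = 1} := (Fintype.card_subtype _).symm
        _ = Fintype.card (rootsOfUnity e F) :=
            Fintype.card_congr (Equiv.subtypeEquivRight (fun t => (mem_rootsOfUnity e t).symm))
        _ = e := by rw [← Nat.card_eq_fintype_card]; exact hprimroot.card_rootsOfUnity
    have hNe : N = e := by
      have hbij : (univ.filter (fun y : Fˣ => y ^ e = u)).card
          = (univ.filter (fun t : Fˣ => t ^ e = 1)).card := by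
        refine Finset.card_bij (fun y _ => y * c⁻¹) ?_ ?_ ?_
        · intro y hy
          simp only [Finset.mem_filter, Finset.mem_univ, true_and] at hy ⊢
          rw [mul_pow, hy, inv_pow, hc, mul_inv_cancel]
        · intro y1 h1 y2 h2 h
          exact mul_right_cancel h
        · intro t ht
          simp only [Finset.mem_filter, Finset.mem_univ, true_and] at ht
          exact ⟨t * c, by simp only [Finset.mem_filter, Finset.mem_univ, true_and,
            mul_pow, ht, one_mul, hc], by simp [mul_assoc]⟩
      rw [hN, hbij, hroots]
    have hc1 : (c : F) ^ (q - 1) = 1 := by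
      rw [← Units.val_pow_eq_pow_val, ← hq1, pow_card_eq_one, Units.val_one]
    have hterm : ∀ i ∈ Finset.Icc 1 (e - 1), ((T ^ (i * d))⁻¹ : MulChar F ℂ) b = 1 := by
      intro i _
      rw [MulChar.inv_apply_eq_inv', ← hbu, MulChar.pow_apply_coe]
      have hval : T (u : F) ^ (i * d) = 1 := by
        have h1 : (u : F) = (c : F) ^ e := by rw [← hc, Units.val_pow_eq_pow_val]
        calc T (u : F) ^ (i * d) = T ((c : F) ^ e) ^ (i * d) := by rw [h1]
          _ = T (c : F) ^ (e * (i * d)) := by rw [map_pow, ← pow_mul]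
          _ = (T (c : F) ^ (q - 1)) ^ i := by rw [← pow_mul, ← hed]; ring_nf
          _ = 1 := by rw [← map_pow, hc1, map_one, one_pow]
      rw [hval, inv_one]
    have hsum1 : ∑ i ∈ Finset.Icc 1 (e - 1), ((T ^ (i * d))⁻¹ : MulChar F ℂ) b
        = ((e : ℂ) - 1) := by
      rw [Finset.sum_congr rfl hterm, Finset.sum_const, Nat.card_Icc, nsmul_eq_mul, mul_one]
      have : e - 1 + 1 - 1 = e - 1 := by omega
      rw [this, Nat.cast_sub (by omega : 1 ≤ e), Nat.cast_one]
    rw [step1, step2, hNe, hsum1]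
    ring
  · have hN0 : N = 0 := by
      rw [hN, Finset.card_eq_zero, Finset.filter_eq_empty_iff]
      exact fun y _ h => hcase ⟨y, h⟩
    have hud : u ^ d ≠ 1 := by
      intro h
      obtain ⟨g, hg⟩ := IsCyclic.exists_generator (α := Fˣ)
      have hog : orderOf g = q - 1 := by
        rw [orderOf_eq_card_of_forall_mem_zpowers hg, Nat.card_eq_fintype_card, hq1]
      obtain ⟨k, hk⟩ := Subgroup.mem_zpowers_iff.mp (hg u)
      rw [← hk, ← zpow_natCast, ← zpow_mul] at h
      have hdvd : ((orderOf g : ℤ)) ∣ k * d := orderOf_dvd_iff_zpow_eq_one.mpr h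
      rw [hog, ← hed] at hdvd
      have hdvd2 : (e : ℤ) * d ∣ k * d := by push_cast at hdvd ⊢; exact hdvd
      have hek : (e : ℤ) ∣ k :=
        (mul_dvd_mul_iff_right (by exact_mod_cast hdpos.ne' : (d : ℤ) ≠ 0)).mp hdvd2
      obtain ⟨m, hm⟩ := hek
      exact hcase ⟨g ^ m, by rw [← hk, hm, ← zpow_natCast, ← zpow_mul, mul_comm]⟩
    have hbd : b ^ d ≠ 1 := by
      intro h
      apply hud
      ext
      rw [Units.val_pow_eq_pow_val, hbu, h, Units.val_one]
    have hbd_unit : b ^ d = ((u ^ d : Fˣ) : F) := by rw [Units.val_pow_eq_pow_val, hbu]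
    have hTbd : T (b ^ d) ≠ 1 := by
      intro h
      obtain ⟨χ, hχ⟩ := MulChar.exists_apply_ne_one_of_hasEnoughRootsOfUnity F ℂ hbd
      obtain ⟨k, rfl⟩ := hT χ
      apply hχ
      rw [hbd_unit] at h ⊢
      rw [MulChar.pow_apply_coe, h, one_pow]
    set w : ℂ := T b ^ d with hw
    have hw1 : w ≠ 1 := by rw [hw, ← map_pow]; exact hTbd
    have hwe : w ^ e = 1 := by rw [hw, ← pow_mul, mul_comm d e, hed, hTb_pow]
    have hv1 : w⁻¹ ≠ 1 := fun h => hw1 (by rw [← inv_inv w, h, inv_one])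
    have hve : (w⁻¹) ^ e = 1 := by rw [inv_pow, hwe, inv_one]
    have hterm : ∀ i ∈ Finset.Icc 1 (e - 1),
        ((T ^ (i * d))⁻¹ : MulChar F ℂ) b = (w⁻¹) ^ i := by
      intro i _
      rw [MulChar.inv_apply_eq_inv', ← hbu, MulChar.pow_apply_coe, hbu,
        show i * d = d * i from mul_comm i d, pow_mul, ← hw, ← inv_pow]
    have hsum1 : ∑ i ∈ Finset.Icc 1 (e - 1), ((T ^ (i * d))⁻¹ : MulChar F ℂ) b = -1 := by
      rw [Finset.sum_congr rfl hterm]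
      have hgeom : ∑ i ∈ Finset.range e, (w⁻¹) ^ i = 0 := by
        rw [geom_sum_eq hv1, hve]
        simp
      have hr : Finset.range e = insert 0 (Finset.Icc 1 (e - 1)) := by
        ext i
        simp only [Finset.mem_range, Finset.mem_insert, Finset.mem_Icc]
        omega
      rw [hr, Finset.sum_insert (by simp)] at hgeom
      simp only [pow_zero] at hgeom
      linear_combination hgeom
    rw [step1, step2, hN0, hsum1]
    push_cast
    ring
end

section
/- Let q be an odd prime power, and α, β ∈ F_q* with α ≠ β. The number of affine points on the twisted Edwards curve C_{α,β}: αx^2 + y^2 = 1 + βx^2y^2 over F_q equals q − 1 − φ(β) − φ(αβ) + q·φ(−α)·₂F₁(φ, φ; ε | β/α), where φ is the quadratic character and ε the trivial character of F_q. -/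
open Finset

/-- Greene`s Gaussian hypergeometric series `₂F₁(A,B;C|x)`, with the sum over all
multiplicative characters written as `χ = T^m` for a generator `T`. -/
noncomputable def hyp2F1 (F : Type) [Field F] [Fintype F] (q : ℕ)
    (T A B C : MulChar F ℂ) (x : F) : ℂ :=
  (q : ℂ) / ((q : ℂ) - 1) *
    ∑ m ∈ Finset.range (q - 1),
      greeneBinom F (A * T ^ m) (T ^ m) * greeneBinom F (B * T ^ m) (C * T ^ m) * (T ^ m) x


section Aux

variable {F : Type} [Field F] [Fintype F] [DecidableEq F]

-- faithfulness of a generating character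
lemma gen_faithful (T : MulChar F ℂ) (hT : ∀ χ : MulChar F ℂ, ∃ k : ℕ, χ = T ^ k)
    {a : F} (ha : a ≠ 0) (h1 : T a = 1) : a = 1 := by
  by_contra hne
  haveI : NeZero ((Monoid.exponent Fˣ : ℕ) : ℂ) :=
    ⟨by exact_mod_cast Monoid.exponent_ne_zero_of_finite⟩
  obtain ⟨χ, hχ⟩ := MulChar.exists_apply_ne_one_of_hasEnoughRootsOfUnity F ℂ hne
  obtain ⟨k, rfl⟩ := hT χ
  apply hχ
  have : ((ha.isUnit.unit : Fˣ) : F) = a := ha.isUnit.unit_spec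
  rw [← this, MulChar.pow_apply_coe T k (ha.isUnit.unit), this, h1, one_pow]

end Aux

section Aux2

variable {F : Type} [Field F] [Fintype F] [DecidableEq F]

lemma phi_spec (q : ℕ) (hcard : Fintype.card F = q) (hq : IsPrimePow q) (hodd : Odd q)
    (T : MulChar F ℂ) (hT : ∀ χ : MulChar F ℂ, ∃ k : ℕ, χ = T ^ k)
    (φ : MulChar F ℂ) (hφ : φ = T ^ ((q - 1) / 2)) :
    (∀ a : F, ((Finset.univ.filter (fun y : F => y ^ 2 = a)).card : ℂ) = 1 + φ a)
    ∧ (∀ a : F, a ≠ 0 → φ a * φ a = 1) ∧ φ ≠ 1 := by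
  have hq3 : 3 ≤ q := by
    rcases Nat.lt_or_ge q 3 with h | h
    · interval_cases q
      · exact absurd hq not_isPrimePow_zero
      · exact absurd hq not_isPrimePow_one
      · exact absurd hodd (by decide)
    · exact h
  obtain ⟨k, hk⟩ := hodd
  have hchar : ringChar F ≠ 2 := by
    intro h
    have := (FiniteField.even_card_iff_char_two (F := F)).mp h
    rw [hcard] at this
    omega
  have hhalfne : (q - 1) / 2 ≠ 0 := by omega
  have hhalf : 2 * ((q - 1) / 2) = q - 1 := by omega
  have hqhalf : q / 2 = (q - 1) / 2 := by omega
  -- φ (b^2) = 1 for b ≠ 0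
  have hsq1 : ∀ b : F, b ≠ 0 → φ (b ^ 2) = 1 := by
    intro b hb
    rw [hφ, MulChar.pow_apply' T hhalfne, ← map_pow, ← pow_mul, mul_comm 2, mul_comm _ 2, hhalf,
      ← hcard, FiniteField.pow_card_sub_one_eq_one b hb, map_one]
  have hsqmul : ∀ a : F, a ≠ 0 → φ a * φ a = 1 := by
    intro a ha
    rw [← map_mul, ← sq]
    exact hsq1 a ha
  -- nonsquares map to -1
  have hnonsq : ∀ a : F, ¬IsSquare a → φ a = -1 := by
    intro a hns
    have ha : a ≠ 0 := fun h => hns (h ▸ ⟨0, (mul_zero 0).symm⟩)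
    rcases mul_self_eq_one_iff.mp (hsqmul a ha) with h1 | h2
    · exfalso
      apply hns
      rw [FiniteField.isSquare_iff hchar ha, hcard, hqhalf]
      apply gen_faithful T hT (pow_ne_zero _ ha)
      have := h1
      rw [hφ, MulChar.pow_apply' T hhalfne, ← map_pow] at this
      exact this
    · exact h2
  have hsqval : ∀ a : F, a ≠ 0 → IsSquare a → φ a = 1 := by
    intro a ha ⟨c, hc⟩
    have hc0 : c ≠ 0 := by rintro rfl; simp at hc; exact ha hc
    rw [hc, ← sq]
    exact hsq1 c hc0
  -- φ agrees with the quadratic character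
  have hval : ∀ a : F, φ a = ((quadraticChar F a : ℤ) : ℂ) := by
    intro a
    by_cases ha : a = 0
    · rw [ha, MulChar.map_zero]; simp
    by_cases hs : IsSquare a
    · rw [hsqval a ha hs, (quadraticChar_one_iff_isSquare ha).mpr hs]
      norm_num
    · rw [hnonsq a hs, quadraticChar_neg_one_iff_not_isSquare.mpr hs]
      norm_num
  have hcount : ∀ a : F, ((Finset.univ.filter (fun y : F => y ^ 2 = a)).card : ℂ)
      = 1 + φ a := by
    intro a
    have := quadraticChar_card_sqrts hchar a
    rw [Set.toFinset_setOf] at this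
    rw [hval a]
    calc ((Finset.univ.filter (fun y : F => y ^ 2 = a)).card : ℂ)
        = ((quadraticChar F a + 1 : ℤ) : ℂ) := by exact_mod_cast this
      _ = 1 + ((quadraticChar F a : ℤ) : ℂ) := by push_cast; ring
  have hne1 : φ ≠ 1 := by
    obtain ⟨a, hns⟩ := FiniteField.exists_nonsquare hchar
    have ha : a ≠ 0 := fun h => hns (h ▸ ⟨0, (mul_zero 0).symm⟩)
    intro h
    have := hnonsq a hns
    rw [h, MulChar.one_apply ha.isUnit] at this
    norm_num at this
  exact ⟨hcount, hsqmul, hne1⟩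

end Aux2

section Aux3

variable {F : Type} [Field F] [Fintype F] [DecidableEq F]

lemma ortho (q : ℕ) (hcard : Fintype.card F = q) (hq3 : 3 ≤ q)
    (T : MulChar F ℂ) (hT : ∀ χ : MulChar F ℂ, ∃ k : ℕ, χ = T ^ k) (z w : F) :
    ∑ m ∈ Finset.range (q - 1), (T ^ m) z * (T ^ m)⁻¹ w
      = if z = w ∧ z ≠ 0 then (q : ℂ) - 1 else 0 := by
  by_cases hz : z = 0
  · rw [if_neg (by tauto)]
    apply Finset.sum_eq_zero
    intro m _
    rw [hz, MulChar.map_zero, zero_mul]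
  by_cases hw : w = 0
  · rw [if_neg (by rintro ⟨rfl, -⟩; exact hz hw)]
    apply Finset.sum_eq_zero
    intro m _
    rw [hw, MulChar.map_zero, mul_zero]
  have hy : z * w⁻¹ ≠ 0 := mul_ne_zero hz (inv_ne_zero hw)
  have hrw : ∀ m : ℕ, (T ^ m) z * (T ^ m)⁻¹ w = (T (z * w⁻¹)) ^ m := by
    intro m
    rw [MulChar.inv_apply', ← map_mul]
    have hu : ((hy.isUnit.unit : Fˣ) : F) = z * w⁻¹ := hy.isUnit.unit_spec
    rw [← hu, MulChar.pow_apply_coe]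
  simp only [hrw]
  have hpow : (T (z * w⁻¹)) ^ (q - 1) = 1 := by
    rw [← map_pow, ← hcard, FiniteField.pow_card_sub_one_eq_one _ hy, map_one]
  by_cases hzw : z = w
  · rw [if_pos ⟨hzw, hz⟩]
    have : z * w⁻¹ = 1 := by rw [hzw, mul_inv_cancel₀ hw]
    simp only [this, map_one, one_pow, Finset.sum_const, Finset.card_range, nsmul_eq_mul,
      mul_one]
    rw [Nat.cast_sub (by omega), Nat.cast_one]
  · rw [if_neg (by tauto)]
    have hne1 : T (z * w⁻¹) ≠ 1 := by
      intro h
      have := gen_faithful T hT hy h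
      apply hzw
      field_simp at this
      exact this
    rw [geom_sum_eq hne1, hpow, sub_self, zero_div]

lemma sum_sq_expand (φ : MulChar F ℂ)
    (hcount : ∀ a : F, ((Finset.univ.filter (fun y : F => y ^ 2 = a)).card : ℂ) = 1 + φ a)
    (G : F → ℂ) : ∑ x : F, G (x ^ 2) = ∑ t : F, (1 + φ t) * G t := by
  rw [← Finset.sum_fiberwise_of_maps_to' (fun x _ => Finset.mem_univ (x ^ 2)) G]
  refine Finset.sum_congr rfl fun t _ => ?_
  rw [Finset.sum_const, nsmul_eq_mul, ← hcount]

end Aux3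

section Aux4

variable {F : Type} [Field F] [Fintype F] [DecidableEq F]

lemma stepC (φ : MulChar F ℂ) (hφinv : ∀ a : F, φ a⁻¹ = φ a)
    (hsq2 : ∀ a : F, a ≠ 0 → φ (a ^ 2) = 1)
    (hsum0 : ∑ a : F, φ a = 0)
    (α β : F) (hα : α ≠ 0) (hβ : β ≠ 0) (hαβ : α ≠ β) :
    ∑ t : F, φ ((1 - α * t) * (1 - β * t)) = - φ (α * β) := by
  have hba : β - α ≠ 0 := sub_ne_zero.mpr (Ne.symm hαβ)
  have h1 : ∑ t : F, φ ((1 - α * t) * (1 - β * t))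
      = ∑ t ∈ Finset.univ.filter (fun t => 1 - α * t ≠ 0), φ ((1 - α * t) * (1 - β * t)) := by
    rw [Finset.sum_filter]
    refine (Finset.sum_congr rfl fun t _ => ?_).symm
    split
    · rfl
    · next h =>
      rw [not_not.mp h, zero_mul, MulChar.map_zero]
  rw [h1]
  have h2 : ∑ t ∈ Finset.univ.filter (fun t => 1 - α * t ≠ 0), φ ((1 - α * t) * (1 - β * t))
      = ∑ u ∈ Finset.univ.filter (fun u => β - α * u ≠ 0), φ u := by
    apply Finset.sum_nbij' (i := fun t => (1 - β * t) / (1 - α * t))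
      (j := fun u => (1 - u) / (β - α * u))
    · intro t ht
      simp only [Finset.mem_filter, Finset.mem_univ, true_and] at ht ⊢
      have : β - α * ((1 - β * t) / (1 - α * t)) = (β - α) / (1 - α * t) := by
        field_simp
        ring
      rw [this]
      exact div_ne_zero hba ht
    · intro u hu
      simp only [Finset.mem_filter, Finset.mem_univ, true_and] at hu ⊢
      have : 1 - α * ((1 - u) / (β - α * u)) = (β - α) / (β - α * u) := by
        field_simp
        ring
      rw [this]
      exact div_ne_zero hba hu
    · intro t ht
      simp only [Finset.mem_filter, Finset.mem_univ, true_and] at ht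
      have e1 : 1 - (1 - β * t) / (1 - α * t) = (β - α) * t / (1 - α * t) := by
        rw [eq_div_iff ht]
        linear_combination (-1 : F) * div_mul_cancel₀ (1 - β * t) ht
      have e2 : β - α * ((1 - β * t) / (1 - α * t)) = (β - α) / (1 - α * t) := by
        field_simp
        ring
      rw [e1, e2, div_div_div_eq]
      field_simp [ht, hba]
    · intro u hu
      simp only [Finset.mem_filter, Finset.mem_univ, true_and] at hu
      have e1 : 1 - β * ((1 - u) / (β - α * u)) = (β - α) * u / (β - α * u) := by
        rw [eq_div_iff hu]
        linear_combination (-β) * div_mul_cancel₀ (1 - u) hu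
      have e2 : 1 - α * ((1 - u) / (β - α * u)) = (β - α) / (β - α * u) := by
        field_simp
        ring
      rw [e1, e2, div_div_div_eq]
      field_simp [hu, hba]
    · intro t ht
      simp only [Finset.mem_filter, Finset.mem_univ, true_and] at ht
      have e : (1 - α * t) * (1 - β * t) = ((1 - β * t) / (1 - α * t)) * (1 - α * t) ^ 2 := by
        field_simp
      rw [e, map_mul, hsq2 _ ht, mul_one]
  rw [h2]
  have h3 : Finset.univ.filter (fun u : F => ¬ (β - α * u ≠ 0)) = {β / α} := by
    ext u
    simp only [Finset.mem_filter, Finset.mem_univ, true_and, not_not, Finset.mem_singleton]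
    rw [sub_eq_zero, eq_div_iff hα]
    constructor
    · intro h
      rw [mul_comm] at h
      exact h.symm
    · intro h
      rw [← h]
      ring
  have h4 := Finset.sum_filter_add_sum_filter_not Finset.univ (fun u : F => β - α * u ≠ 0) (fun u => φ u)
  rw [h3, Finset.sum_singleton, hsum0] at h4
  have h5 : φ (β / α) = φ (α * β) := by
    rw [div_eq_mul_inv, map_mul, hφinv, map_mul, mul_comm]
  rw [h5] at h4
  linear_combination h4

end Aux4

section Aux5

variable {F : Type} [Field F] [Fintype F] [DecidableEq F]

lemma mobius_sub (φ : MulChar F ℂ) (hsq2 : ∀ a : F, a ≠ 0 → φ (a ^ 2) = 1) (l : F) :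
    ∑ u : F, φ (u * (1 - u) * (1 - u + u * l))
      = φ (-1) * ∑ s : F, φ (s * (1 - s) * (1 - l * s)) := by
  rw [Finset.mul_sum]
  have reduce : ∀ g : F → ℂ, g 1 = 0 →
      ∑ u : F, g u = ∑ u ∈ Finset.univ.filter (fun u => u ≠ 1), g u := by
    intro g hg
    rw [Finset.sum_filter]
    refine (Finset.sum_congr rfl fun u _ => ?_).symm
    split
    · rfl
    · next h => rw [not_not.mp h, hg]
  rw [reduce _ (by simp [MulChar.map_zero]), reduce _ (by simp [MulChar.map_zero])]
  apply Finset.sum_nbij' (i := fun u => u / (u - 1)) (j := fun s => s / (s - 1))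
  · intro u hu
    simp only [Finset.mem_filter, Finset.mem_univ, true_and] at hu ⊢
    intro h
    have hd : u - 1 ≠ 0 := sub_ne_zero.mpr hu
    rw [div_eq_one_iff_eq hd] at h
    exact one_ne_zero (by linear_combination h : (1 : F) = 0)
  · intro s hs
    simp only [Finset.mem_filter, Finset.mem_univ, true_and] at hs ⊢
    intro h
    have hd : s - 1 ≠ 0 := sub_ne_zero.mpr hs
    rw [div_eq_one_iff_eq hd] at h
    exact one_ne_zero (by linear_combination h : (1 : F) = 0)
  · intro u hu
    simp only [Finset.mem_filter, Finset.mem_univ, true_and] at hu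
    have hd : u - 1 ≠ 0 := sub_ne_zero.mpr hu
    have h2 : u / (u - 1) - 1 = 1 / (u - 1) := by
      field_simp
      ring
    rw [h2, div_div_div_eq]
    field_simp [hd]
  · intro s hs
    simp only [Finset.mem_filter, Finset.mem_univ, true_and] at hs
    have hd : s - 1 ≠ 0 := sub_ne_zero.mpr hs
    have h2 : s / (s - 1) - 1 = 1 / (s - 1) := by
      field_simp
      ring
    rw [h2, div_div_div_eq]
    field_simp [hd]
  · intro u hu
    simp only [Finset.mem_filter, Finset.mem_univ, true_and] at hu
    have hd : u - 1 ≠ 0 := sub_ne_zero.mpr hu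
    set s := u / (u - 1) with hsdef
    have key : u * (1 - u) * (1 - u + u * l)
        = (-1) * (s * (1 - s) * (1 - l * s)) * ((u - 1) ^ 2) ^ 2 := by
      rw [hsdef]
      field_simp
      ring
    rw [key, map_mul, hsq2 _ (pow_ne_zero 2 hd), mul_one, map_mul]
end Aux5

section Aux6

variable {F : Type} [Field F] [Fintype F] [DecidableEq F]

lemma inner_v_sum (φ : MulChar F ℂ) (hφinv : ∀ a : F, φ a⁻¹ = φ a)
    (l : F) (hl : l ≠ 0) (u : F) :
    ∑ v : F, (if u * v * l = (1 - u) * (1 - v) ∧ u * v * l ≠ 0 then φ (u * v) else 0)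
      = φ (u * (1 - u) * (1 - u + u * l)) := by
  by_cases hu0 : u = 0
  · rw [hu0]
    simp [MulChar.map_zero]
  by_cases hu1 : u = 1
  · rw [hu1]
    have : ∀ v : F, ¬ (1 * v * l = (1 - 1) * (1 - v) ∧ 1 * v * l ≠ 0) := by
      intro v
      rintro ⟨hc, hc0⟩
      apply hc0
      rw [hc]
      ring
    simp only [this, if_false, Finset.sum_const_zero]
    rw [show (1 : F) * (1 - 1) * (1 - 1 + 1 * l) = 0 by ring, MulChar.map_zero]
  have h1u : 1 - u ≠ 0 := sub_ne_zero.mpr (Ne.symm hu1)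
  by_cases hD : 1 - u + u * l = 0
  · rw [hD, mul_zero, MulChar.map_zero]
    apply Finset.sum_eq_zero
    intro v _
    rw [if_neg]
    rintro ⟨hc, -⟩
    apply h1u
    have hv : v * (1 - u + u * l) = 1 - u := by linear_combination hc
    rw [hD, mul_zero] at hv
    exact hv.symm
  · have hv0ne : (1 - u) / (1 - u + u * l) ≠ 0 := div_ne_zero h1u hD
    have key : ∀ v : F, (if u * v * l = (1 - u) * (1 - v) ∧ u * v * l ≠ 0 then φ (u * v) else 0)
        = (if v = (1 - u) / (1 - u + u * l) then φ (u * (1 - u) * (1 - u + u * l)) else 0) := by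
      intro v
      by_cases hv : v = (1 - u) / (1 - u + u * l)
      · rw [if_pos hv, if_pos]
        · rw [hv, show u * ((1 - u) / (1 - u + u * l)) = (u * (1 - u)) * (1 - u + u * l)⁻¹ by
            rw [div_eq_mul_inv]; ring, map_mul, hφinv, ← map_mul]
        · constructor
          · rw [hv]
            field_simp
            ring
          · rw [hv]
            exact mul_ne_zero (mul_ne_zero hu0 hv0ne) hl
      · rw [if_neg, if_neg hv]
        rintro ⟨hc, -⟩
        apply hv
        have hveq : v * (1 - u + u * l) = 1 - u := by linear_combination hc
        field_simp
        linear_combination hveq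
    simp only [key]
    rw [Finset.sum_ite_eq' Finset.univ _ _]
    simp

lemma scale_sum (φ : MulChar F ℂ) (α l : F) (hα : α ≠ 0) :
    ∑ s : F, φ (s * (1 - s) * (1 - l * s))
      = φ α * ∑ t : F, φ (t * (1 - α * t) * (1 - l * (α * t))) := by
  rw [Finset.mul_sum]
  apply Finset.sum_nbij' (i := fun s => s / α) (j := fun t => α * t)
  · intro s _; exact Finset.mem_univ _
  · intro t _; exact Finset.mem_univ _
  · intro s _
    field_simp
  · intro t _
    field_simp
  · intro s _
    rw [← map_mul]
    congr 1
    field_simp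

end Aux6

section Aux7

variable {F : Type} [Field F] [Fintype F] [DecidableEq F]

lemma count_c (φ : MulChar F ℂ)
    (hcount : ∀ a : F, ((Finset.univ.filter (fun y : F => y ^ 2 = a)).card : ℂ) = 1 + φ a)
    (hφinv : ∀ a : F, φ a⁻¹ = φ a)
    (c d : F) (hcd : c = 0 → d ≠ 0) :
    ∑ y : F, (if c * y ^ 2 = d then (1 : ℂ) else 0)
      = 1 + φ (c * d) - if c = 0 then 1 else 0 := by
  by_cases hc : c = 0
  · rw [if_pos hc, hc, zero_mul, MulChar.map_zero]
    have : ∀ y : F, ¬ ((0 : F) * y ^ 2 = d) := by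
      intro y h
      exact hcd hc (by rw [← h]; ring)
    simp only [this, if_false, Finset.sum_const_zero]
    ring
  · rw [if_neg hc, sub_zero]
    have hiff : ∀ y : F, (c * y ^ 2 = d) ↔ (y ^ 2 = d / c) := by
      intro y
      rw [eq_div_iff hc, mul_comm]
    simp only [hiff]
    have : ∑ y : F, (if y ^ 2 = d / c then (1 : ℂ) else 0)
        = ((Finset.univ.filter (fun y : F => y ^ 2 = d / c)).card : ℂ) := by
      rw [Finset.card_filter]
      push_cast
      rfl
    rw [this, hcount]
    congr 1
    rw [div_eq_mul_inv, map_mul, hφinv, mul_comm, ← map_mul]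

lemma stepA (φ : MulChar F ℂ)
    (hcount : ∀ a : F, ((Finset.univ.filter (fun y : F => y ^ 2 = a)).card : ℂ) = 1 + φ a)
    (hφinv : ∀ a : F, φ a⁻¹ = φ a)
    (α β : F) (hα : α ≠ 0) (hβ : β ≠ 0) (hαβ : α ≠ β) :
    ((Finset.univ.filter
        (fun P : F × F => α * P.1 ^ 2 + P.2 ^ 2 = 1 + β * P.1 ^ 2 * P.2 ^ 2)).card : ℂ)
      = (Fintype.card F : ℂ) - 1 - φ β
        + ∑ x : F, φ ((1 - β * x ^ 2) * (1 - α * x ^ 2)) := by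
  have h1 : ((Finset.univ.filter
      (fun P : F × F => α * P.1 ^ 2 + P.2 ^ 2 = 1 + β * P.1 ^ 2 * P.2 ^ 2)).card : ℂ)
      = ∑ x : F, ∑ y : F, (if (1 - β * x ^ 2) * y ^ 2 = 1 - α * x ^ 2 then (1 : ℂ) else 0) := by
    rw [Finset.card_filter]
    push_cast
    rw [Fintype.sum_prod_type]
    refine Finset.sum_congr rfl fun x _ => Finset.sum_congr rfl fun y _ => ?_
    congr 1
    rw [eq_iff_iff]
    constructor
    · intro h
      linear_combination h
    · intro h
      linear_combination h
  rw [h1]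
  have h2 : ∀ x : F, ∑ y : F, (if (1 - β * x ^ 2) * y ^ 2 = 1 - α * x ^ 2 then (1 : ℂ) else 0)
      = 1 + φ ((1 - β * x ^ 2) * (1 - α * x ^ 2)) - if 1 - β * x ^ 2 = 0 then 1 else 0 := by
    intro x
    apply count_c φ hcount hφinv
    intro hc h0
    have hx : x ≠ 0 := by
      rintro rfl
      simp at hc
    apply hαβ
    have e1 : β * x ^ 2 = 1 := by linear_combination -hc
    have e2 : α * x ^ 2 = 1 := by linear_combination -h0
    have := e1.trans e2.symm
    field_simp at this
    exact this.symm
  simp only [h2]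
  rw [Finset.sum_sub_distrib, Finset.sum_add_distrib, Finset.sum_const, Finset.card_univ]
  have h3 : ∑ x : F, (if 1 - β * x ^ 2 = 0 then (1 : ℂ) else 0) = 1 + φ β := by
    have hiff : ∀ x : F, (1 - β * x ^ 2 = 0) ↔ (x ^ 2 = β⁻¹) := by
      intro x
      rw [sub_eq_zero, eq_comm, mul_comm, ← eq_div_iff hβ, div_eq_mul_inv, one_mul]
    simp only [hiff]
    have : ∑ x : F, (if x ^ 2 = β⁻¹ then (1 : ℂ) else 0)
        = ((Finset.univ.filter (fun x : F => x ^ 2 = β⁻¹)).card : ℂ) := by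
      rw [Finset.card_filter]
      push_cast
      rfl
    rw [this, hcount, hφinv]
  rw [h3]
  push_cast
  ring

end Aux7

section AuxD

variable {F : Type} [Field F] [Fintype F] [DecidableEq F]

lemma stepD (q : ℕ) (hcard : Fintype.card F = q) (hq3 : 3 ≤ q)
    (T : MulChar F ℂ) (hT : ∀ χ : MulChar F ℂ, ∃ k : ℕ, χ = T ^ k)
    (φ : MulChar F ℂ) (hφinv : ∀ a : F, φ a⁻¹ = φ a)
    (l : F) (hl : l ≠ 0) :
    hyp2F1 F q T φ φ 1 l
      = (1 / (q : ℂ)) * ∑ u : F, φ (u * (1 - u) * (1 - u + u * l)) := by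
  have hq0 : (q : ℂ) ≠ 0 := by
    simp only [ne_eq, Nat.cast_eq_zero]
    omega
  have hq1 : (q : ℂ) - 1 ≠ 0 := by
    rw [sub_ne_zero]
    intro h
    have : q = 1 := by exact_mod_cast h
    omega
  have hsum : ∑ m ∈ Finset.range (q - 1),
      greeneBinom F (φ * T ^ m) (T ^ m) * greeneBinom F (φ * T ^ m) (1 * T ^ m) * (T ^ m) l
      = ((q : ℂ) - 1) / (q : ℂ) ^ 2 * ∑ u : F, φ (u * (1 - u) * (1 - u + u * l)) := by
    have step1 : ∀ m : ℕ,
        greeneBinom F (φ * T ^ m) (T ^ m) * greeneBinom F (φ * T ^ m) (1 * T ^ m) * (T ^ m) l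
        = (1 / (q : ℂ) ^ 2) * ∑ u : F, ∑ v : F,
            φ u * φ v * ((T ^ m) (u * v * l) * (T ^ m)⁻¹ ((1 - u) * (1 - v))) := by
      intro m
      rw [one_mul]
      unfold greeneBinom
      rw [hcard]
      have hsq : (T ^ m) (-1) * (T ^ m) (-1) = 1 := by
        rw [← map_mul]
        norm_num
      have expand : ∀ a b c : ℂ,
          (a / (q : ℂ) * b) * (a / (q : ℂ) * b) * c = (a * a) * (1 / (q : ℂ) ^ 2 * (b * b * c)) := by
        intro a b c
        field_simp
      rw [expand, hsq, one_mul]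
      congr 1
      rw [jacobiSum, Finset.sum_mul_sum, Finset.sum_mul]
      refine Finset.sum_congr rfl fun u _ => ?_
      rw [Finset.sum_mul]
      refine Finset.sum_congr rfl fun v _ => ?_
      rw [MulChar.mul_apply, MulChar.mul_apply, map_mul (T ^ m), map_mul (T ^ m),
        map_mul (T ^ m)⁻¹]
      ring
    calc ∑ m ∈ Finset.range (q - 1),
        greeneBinom F (φ * T ^ m) (T ^ m) * greeneBinom F (φ * T ^ m) (1 * T ^ m) * (T ^ m) l
        = ∑ m ∈ Finset.range (q - 1), (1 / (q : ℂ) ^ 2) * ∑ u : F, ∑ v : F,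
            φ u * φ v * ((T ^ m) (u * v * l) * (T ^ m)⁻¹ ((1 - u) * (1 - v))) :=
          Finset.sum_congr rfl fun m _ => step1 m
      _ = (1 / (q : ℂ) ^ 2) * ∑ m ∈ Finset.range (q - 1), ∑ u : F, ∑ v : F,
            φ u * φ v * ((T ^ m) (u * v * l) * (T ^ m)⁻¹ ((1 - u) * (1 - v))) := by
          rw [Finset.mul_sum]
      _ = (1 / (q : ℂ) ^ 2) * ∑ u : F, ∑ v : F, ∑ m ∈ Finset.range (q - 1),
            φ u * φ v * ((T ^ m) (u * v * l) * (T ^ m)⁻¹ ((1 - u) * (1 - v))) := by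
          congr 1
          rw [Finset.sum_comm]
          exact Finset.sum_congr rfl fun u _ => Finset.sum_comm
      _ = (1 / (q : ℂ) ^ 2) * ∑ u : F, ∑ v : F, ((q : ℂ) - 1) *
            (if u * v * l = (1 - u) * (1 - v) ∧ u * v * l ≠ 0 then φ (u * v) else 0) := by
          congr 1
          refine Finset.sum_congr rfl fun u _ => Finset.sum_congr rfl fun v _ => ?_
          rw [← Finset.mul_sum, ortho q hcard hq3 T hT]
          split
          · next h =>
            rw [← map_mul]
            ring
          · ring
      _ = ((q : ℂ) - 1) / (q : ℂ) ^ 2 * ∑ u : F, φ (u * (1 - u) * (1 - u + u * l)) := by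
          simp only [← Finset.mul_sum]
          have h5 : ∑ u : F, ∑ v : F,
              (if u * v * l = (1 - u) * (1 - v) ∧ u * v * l ≠ 0 then φ (u * v) else 0)
              = ∑ u : F, φ (u * (1 - u) * (1 - u + u * l)) :=
            Finset.sum_congr rfl fun u _ => inner_v_sum φ hφinv l hl u
          rw [h5]
          ring
  unfold hyp2F1
  rw [hsum]
  field_simp
  ring_nf
  exact Finset.sum_congr rfl fun x _ => congrArg φ (by ring)

end AuxD

/-- The number of affine points on the twisted Edwards curve
`C_{α,β} : αx² + y² = 1 + βx²y²` equals
`q - 1 - φ(β) - φ(αβ) + q·φ(-α)·₂F₁(φ, φ; ε | β/α)`. -/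
theorem twisted_edwards_count (F : Type) [Field F] [Fintype F] [DecidableEq F] (q : ℕ)
    (hcard : Fintype.card F = q) (hq : IsPrimePow q) (hodd : Odd q)
    (T : MulChar F ℂ) (hT : ∀ χ : MulChar F ℂ, ∃ k : ℕ, χ = T ^ k)
    (φ : MulChar F ℂ) (hφ : φ = T ^ ((q - 1) / 2))
    (α β : F) (hα : α ≠ 0) (hβ : β ≠ 0) (hαβ : α ≠ β) :
    ((Finset.univ.filter
        (fun P : F × F => α * P.1 ^ 2 + P.2 ^ 2 = 1 + β * P.1 ^ 2 * P.2 ^ 2)).card : ℂ)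
      = (q : ℂ) - 1 - φ β - φ (α * β)
        + (q : ℂ) * φ (-α) * hyp2F1 F q T φ φ 1 (β / α) := by
  have hq3 : 3 ≤ q := by
    rcases Nat.lt_or_ge q 3 with h | h
    · interval_cases q
      · exact absurd hq not_isPrimePow_zero
      · exact absurd hq not_isPrimePow_one
      · exact absurd hodd (by decide)
    · exact h
  obtain ⟨hcount, hsqmul, hne1⟩ := phi_spec q hcard hq hodd T hT φ hφ
  have hsq2 : ∀ a : F, a ≠ 0 → φ (a ^ 2) = 1 := fun a ha => by
    rw [sq, map_mul]; exact hsqmul a ha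
  have hφinv : ∀ a : F, φ a⁻¹ = φ a := by
    intro a
    by_cases ha : a = 0
    · rw [ha, inv_zero]
    · have h1 : φ a⁻¹ * φ a = 1 := by rw [← map_mul, inv_mul_cancel₀ ha, map_one]
      have h2 := hsqmul a ha
      calc φ a⁻¹ = φ a⁻¹ * (φ a * φ a) := by rw [h2, mul_one]
        _ = (φ a⁻¹ * φ a) * φ a := by ring
        _ = φ a := by rw [h1, one_mul]
  have hsum0 : ∑ a : F, φ a = 0 := MulChar.sum_eq_zero_of_ne_one hne1
  set l := β / α with hldef
  have hl : l ≠ 0 := div_ne_zero hβ hα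
  have hA := stepA φ hcount hφinv α β hα hβ hαβ
  rw [hcard] at hA
  have hB : ∑ x : F, φ ((1 - β * x ^ 2) * (1 - α * x ^ 2))
      = (∑ t : F, φ ((1 - α * t) * (1 - β * t)))
        + ∑ t : F, φ (t * (1 - α * t) * (1 - β * t)) := by
    rw [sum_sq_expand φ hcount (fun t => φ ((1 - β * t) * (1 - α * t)))]
    have e1 : ∀ t : F, (1 + φ t) * φ ((1 - β * t) * (1 - α * t))
        = φ ((1 - α * t) * (1 - β * t)) + φ (t * (1 - α * t) * (1 - β * t)) := by
      intro t
      rw [show (1 - β * t) * (1 - α * t) = (1 - α * t) * (1 - β * t) from by ring, add_mul,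
        one_mul, ← map_mul,
        show t * ((1 - α * t) * (1 - β * t)) = t * (1 - α * t) * (1 - β * t) from by ring]
    simp only [e1]
    rw [Finset.sum_add_distrib]
  have hC := stepC φ hφinv hsq2 hsum0 α β hα hβ hαβ
  have hq0 : (q : ℂ) ≠ 0 := by
    simp only [ne_eq, Nat.cast_eq_zero]
    omega
  have hD : (q : ℂ) * φ (-α) * hyp2F1 F q T φ φ 1 l
      = ∑ t : F, φ (t * (1 - α * t) * (1 - β * t)) := by
    rw [stepD q hcard hq3 T hT φ hφinv l hl, mobius_sub φ hsq2 l, scale_sum φ α l hα]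
    have e2 : ∀ t : F, φ (t * (1 - α * t) * (1 - l * (α * t)))
        = φ (t * (1 - α * t) * (1 - β * t)) := by
      intro t
      have : l * (α * t) = β * t := by
        rw [hldef]
        field_simp
      rw [this]
    simp only [e2]
    have e3 : φ (-α) * (φ (-1) * φ α) = 1 := by
      rw [← map_mul, ← map_mul, show -α * (-1 * α) = α * α from by ring, map_mul]
      exact hsqmul α hα
    have hqq : (q : ℂ) * (1 / (q : ℂ)) = 1 := by field_simp
    calc (q : ℂ) * φ (-α) * (1 / (q : ℂ) * (φ (-1)
          * (φ α * ∑ t : F, φ (t * (1 - α * t) * (1 - β * t)))))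
        = (φ (-α) * (φ (-1) * φ α)) * (((q : ℂ) * (1 / (q : ℂ)))
            * ∑ t : F, φ (t * (1 - α * t) * (1 - β * t))) := by ring
      _ = ∑ t : F, φ (t * (1 - α * t) * (1 - β * t)) := by rw [e3, hqq, one_mul, one_mul]
  rw [hA, hB, hC, hD]
  ring
end

section
/- Let q ≡ 1 (mod 4) be a prime power, φ the quadratic character and ε the trivial character of F_q, and T a generator of the character group. Then ₂F₁(φ, φ; ε | 1/2) = φ(−2)·[binom(T^{(q−1)/4}, φ) + binom(T^{3(q−1)/4}, φ)]. -/
namespace Hyp2F1Aux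

variable {F : Type} [Field F] [Fintype F]

lemma faithful (T : MulChar F ℂ) (hT : ∀ χ : MulChar F ℂ, ∃ k : ℕ, χ = T ^ k)
    {u : F} (h : T u = 1) : u = 1 := by
  by_contra hu
  obtain ⟨χ, hχ⟩ := MulChar.exists_apply_ne_one_of_hasEnoughRootsOfUnity F ℂ hu
  obtain ⟨k, rfl⟩ := hT χ
  rcases eq_or_ne u 0 with rfl | h0
  · rw [MulChar.map_nonunit T (by simp)] at h
    exact one_ne_zero h.symm
  · have hc := MulChar.pow_apply_coe T k h0.isUnit.unit
    rw [h0.isUnit.unit_spec, h, one_pow] at hc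
    exact hχ hc

lemma q_ge_five {q : ℕ} (hq : IsPrimePow q) (h4 : 4 ∣ q - 1) : 5 ≤ q := by
  have h2 : 2 ≤ q := hq.two_le
  rcases h4 with ⟨c, hc⟩
  rcases Nat.eq_zero_or_pos c with rfl | hcpos
  · omega
  · omega

lemma two_ne_zero' {q : ℕ} (hcard : Fintype.card F = q) (h4 : 4 ∣ q - 1)
    (hq : IsPrimePow q) : (2 : F) ≠ 0 := by
  intro h
  have hdvd : (ringChar F) ∣ 2 := (CharP.cast_eq_zero_iff F (ringChar F) 2).mp (by exact_mod_cast h)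
  have hp : (ringChar F).Prime := CharP.char_is_prime F (ringChar F)
  have hchar : ringChar F = 2 := (Nat.prime_dvd_prime_iff_eq hp Nat.prime_two).mp hdvd
  have heven := FiniteField.even_card_of_char_two hchar
  rw [hcard] at heven
  have h5 := q_ge_five hq h4
  obtain ⟨c, hc⟩ := h4
  omega


lemma T_pow_card_sub_one {q : ℕ} (hcard : Fintype.card F = q) (T : MulChar F ℂ)
    {u : F} (hu : u ≠ 0) : T u ^ (q - 1) = 1 := by
  rw [← map_pow, ← hcard, FiniteField.pow_card_sub_one_eq_one u hu, map_one]

open scoped Classical in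
/-- Orthogonality. -/
lemma orth {q : ℕ} (hcard : Fintype.card F = q) (T : MulChar F ℂ)
    (hT : ∀ χ : MulChar F ℂ, ∃ k : ℕ, χ = T ^ k) (u : F) :
    ∑ m ∈ Finset.range (q - 1), (T ^ m) u = if u = 1 then ((q - 1 : ℕ) : ℂ) else 0 := by
  classical
  rcases eq_or_ne u 0 with rfl | h0
  · rw [if_neg (zero_ne_one)]
    exact Finset.sum_eq_zero fun m _ => MulChar.map_nonunit _ (by simp)
  · have hpow : ∀ m : ℕ, (T ^ m) u = (T u) ^ m := fun m => by
      have hc := MulChar.pow_apply_coe T m h0.isUnit.unit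
      rwa [h0.isUnit.unit_spec] at hc
    simp only [hpow]
    rcases eq_or_ne u 1 with rfl | hu1
    · rw [if_pos rfl, map_one]
      simp
    · rw [if_neg hu1]
      have hz : T u ≠ 1 := fun h => hu1 (faithful T hT h)
      rw [geom_sum_eq hz, T_pow_card_sub_one hcard T h0, sub_self, zero_div]


lemma exists_generator {q : ℕ} (hcard : Fintype.card F = q) :
    ∃ g : Fˣ, orderOf g = q - 1 ∧ ∀ x : Fˣ, x ∈ Submonoid.powers g := by
  classical
  obtain ⟨g, hg⟩ := IsCyclic.exists_ofOrder_eq_natCard (α := Fˣ)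
  have hord : orderOf g = q - 1 := by
    rw [hg, Nat.card_eq_fintype_card, Fintype.card_units, hcard]
  refine ⟨g, hord, fun x => ?_⟩
  have htop : Subgroup.zpowers g = ⊤ := by
    apply Subgroup.eq_top_of_card_eq
    rw [Nat.card_zpowers, hg]
  rw [mem_powers_iff_mem_zpowers, htop]
  trivial

lemma exists_pow_of_pow_div {q : ℕ} (hcard : Fintype.card F = q) {d : ℕ} (hd : d ∣ q - 1)
    (hd0 : d ≠ 0) (hq1 : q - 1 ≠ 0) {t : F} (ht : t ≠ 0)
    (h : t ^ ((q - 1) / d) = 1) : ∃ s : F, s ^ d = t := by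
  classical
  obtain ⟨g, hord, hgen⟩ := exists_generator hcard
  obtain ⟨a, ha⟩ := hgen ht.isUnit.unit
  set e := (q - 1) / d with he
  have hde : d * e = q - 1 := Nat.mul_div_cancel' hd
  have he0 : e ≠ 0 := by
    intro h0
    rw [h0, mul_zero] at hde
    exact hq1 hde.symm
  have hu : (g ^ a) ^ e = 1 := by
    apply Units.ext
    push_cast [ha]
    rw [ht.isUnit.unit_spec, h]
  rw [← pow_mul] at hu
  have hdvd : q - 1 ∣ a * e := hord ▸ orderOf_dvd_of_pow_eq_one hu
  have hda : d ∣ a := by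
    rcases hdvd with ⟨k, hk⟩
    rw [← hde] at hk
    have : a * e = (d * k) * e := by rw [hk]; ring
    have ha' : a = d * k := Nat.eq_of_mul_eq_mul_right (Nat.pos_of_ne_zero he0) this
    exact ⟨k, ha'⟩
  refine ⟨((g ^ (a / d) : Fˣ) : F), ?_⟩
  have : ((g ^ (a / d) : Fˣ) : F) ^ d = ((g ^ (a / d * d) : Fˣ) : F) := by
    push_cast
    rw [← pow_mul]
  have ha' : g ^ a = ht.isUnit.unit := ha
  rw [this, Nat.div_mul_cancel hda, ha', ht.isUnit.unit_spec]

lemma exists_primroot {q : ℕ} (hcard : Fintype.card F = q) {d : ℕ} (hd : d ∣ q - 1)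
    (hd0 : d ≠ 0) (hq1 : q - 1 ≠ 0) : ∃ ζ : F, IsPrimitiveRoot ζ d := by
  obtain ⟨g, hord, -⟩ := exists_generator hcard
  set e := (q - 1) / d with he
  have hde : d * e = q - 1 := Nat.mul_div_cancel' hd
  refine ⟨((g ^ e : Fˣ) : F), ?_⟩
  have h1 : orderOf ((g ^ e : Fˣ) : F) = orderOf (g ^ e) := orderOf_units
  have h2 : orderOf (g ^ e) = d := by
    rw [orderOf_pow, hord]
    have he0 : 0 < e := Nat.pos_of_ne_zero (fun h0 => by rw [h0, mul_zero] at hde; omega)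
    have : Nat.gcd (q - 1) e = e := Nat.gcd_eq_right ⟨d, by rw [← hde, Nat.mul_comm]⟩
    rw [this, ← hde, Nat.mul_div_cancel _ he0]
  have := IsPrimitiveRoot.orderOf ((g ^ e : Fˣ) : F)
  rwa [h1, h2] at this

open scoped Classical in
lemma card_nth_roots_one {q : ℕ} (hcard : Fintype.card F = q) {d : ℕ} (hd : d ∣ q - 1)
    (hd0 : d ≠ 0) (hq1 : q - 1 ≠ 0) :
    (Finset.univ.filter fun s : F => s ^ d = 1).card = d := by
  obtain ⟨ζ, hζ⟩ := exists_primroot hcard hd hd0 hq1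
  have hset : (Finset.univ.filter fun s : F => s ^ d = 1) = Polynomial.nthRootsFinset d (1 : F) := by
    ext x
    simp [Polynomial.mem_nthRootsFinset (Nat.pos_of_ne_zero hd0)]
  rw [hset]
  exact hζ.card_nthRootsFinset

open scoped Classical in
lemma card_fiber {q : ℕ} (hcard : Fintype.card F = q) (T : MulChar F ℂ)
    (hT : ∀ χ : MulChar F ℂ, ∃ k : ℕ, χ = T ^ k) {d : ℕ} (hd : d ∣ q - 1)
    (hd0 : d ≠ 0) (hq1 : q - 1 ≠ 0) {t : F} (ht : t ≠ 0) :
    ((Finset.univ.filter fun s : F => s ^ d = t).card : ℂ)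
      = ∑ j ∈ Finset.range d, T t ^ (j * ((q - 1) / d)) := by
  set e := (q - 1) / d with he
  have hde : d * e = q - 1 := Nat.mul_div_cancel' hd
  set z := T t ^ e with hzdef
  have hrhs : ∑ j ∈ Finset.range d, T t ^ (j * e) = ∑ j ∈ Finset.range d, z ^ j := by
    refine Finset.sum_congr rfl fun j _ => ?_
    rw [hzdef, ← pow_mul, mul_comm]
  rw [hrhs]
  by_cases hex : ∃ s : F, s ^ d = t
  · obtain ⟨s, rfl⟩ := hex
    have hs0 : s ≠ 0 := fun h => ht (by simp [h, zero_pow hd0])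
    have hz1 : z = 1 := by
      rw [hzdef, map_pow, ← pow_mul, hde]
      exact T_pow_card_sub_one hcard T hs0
    have hb : (Finset.univ.filter fun x : F => x ^ d = s ^ d).card
        = (Finset.univ.filter fun x : F => x ^ d = (1 : F)).card := by
      apply Finset.card_bij' (fun x _ => s⁻¹ * x) (fun y _ => s * y)
      · intro x hx
        simp only [Finset.mem_filter, Finset.mem_univ, true_and] at hx ⊢
        rw [mul_pow, hx, inv_pow, inv_mul_cancel₀ (pow_ne_zero d hs0)]
      · intro y hy
        simp only [Finset.mem_filter, Finset.mem_univ, true_and] at hy ⊢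
        rw [mul_pow, hy, mul_one]
      · intro x _; field_simp
      · intro y _; field_simp
    rw [hz1]
    simp only [one_pow, Finset.sum_const, Finset.card_range, nsmul_eq_mul, mul_one]
    rw [hb, card_nth_roots_one hcard hd hd0 hq1]
  · have hz1 : z ≠ 1 := by
      intro h1
      rw [hzdef, ← map_pow] at h1
      exact hex (exists_pow_of_pow_div hcard hd hd0 hq1 ht (faithful T hT h1))
    have hzd : z ^ d = 1 := by
      rw [hzdef, ← pow_mul, mul_comm e d, hde]
      exact T_pow_card_sub_one hcard T ht
    rw [geom_sum_eq hz1, hzd, sub_self, zero_div]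
    have : (Finset.univ.filter fun s : F => s ^ d = t) = ∅ := by
      rw [Finset.filter_eq_empty_iff]
      intro x _
      exact fun hx => hex ⟨x, hx⟩
    rw [this]
    simp


section Phi

variable {q : ℕ} (T φ : MulChar F ℂ)

lemma phi_sq (hcard : Fintype.card F = q) (hq5 : 5 ≤ q) (h4 : 4 ∣ q - 1)
    (hφ : φ = T ^ ((q - 1) / 2)) {z : F} (hz : z ≠ 0) : φ z * φ z = 1 := by
  obtain ⟨c, hc⟩ := h4
  have hk : (q - 1) / 2 ≠ 0 := by omega
  rw [hφ, MulChar.pow_apply' T hk, ← pow_add]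
  have : (q - 1) / 2 + (q - 1) / 2 = q - 1 := by omega
  rw [this]
  exact T_pow_card_sub_one hcard T hz

lemma phi_ne_zero (hcard : Fintype.card F = q) (hq5 : 5 ≤ q) (h4 : 4 ∣ q - 1)
    (hφ : φ = T ^ ((q - 1) / 2)) {z : F} (hz : z ≠ 0) : φ z ≠ 0 := by
  intro h
  have h2 := phi_sq T φ hcard hq5 h4 hφ hz
  rw [h, mul_zero] at h2
  exact zero_ne_one h2

lemma phi_inv (hcard : Fintype.card F = q) (hq5 : 5 ≤ q) (h4 : 4 ∣ q - 1)
    (hφ : φ = T ^ ((q - 1) / 2)) (z : F) : φ z⁻¹ = φ z := by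
  rcases eq_or_ne z 0 with rfl | hz
  · rw [inv_zero]
  · have h1 : φ z⁻¹ * φ z = 1 := by
      rw [← map_mul, inv_mul_cancel₀ hz, map_one]
    have h2 := phi_sq T φ hcard hq5 h4 hφ hz
    exact mul_right_cancel₀ (phi_ne_zero T φ hcard hq5 h4 hφ hz) (h1.trans h2.symm)

lemma phi_neg_one (hcard : Fintype.card F = q) (hq5 : 5 ≤ q) (h4 : 4 ∣ q - 1)
    (hφ : φ = T ^ ((q - 1) / 2)) : φ (-1) = 1 := by
  obtain ⟨c, hc⟩ := h4
  have hk : (q - 1) / 2 ≠ 0 := by omega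
  rw [hφ, MulChar.pow_apply' T hk, show (q - 1) / 2 = 2 * ((q - 1) / 4) by omega, pow_mul]
  have h1 : T (-1) ^ 2 = 1 := by
    rw [← map_pow]
    norm_num
  rw [h1, one_pow]

lemma phi_ne_one (hcard : Fintype.card F = q) (hq5 : 5 ≤ q) (h4 : 4 ∣ q - 1)
    (hT : ∀ χ : MulChar F ℂ, ∃ k : ℕ, χ = T ^ k)
    (hφ : φ = T ^ ((q - 1) / 2)) : φ ≠ 1 := by
  obtain ⟨g, hord, -⟩ := exists_generator hcard
  intro h
  have hk : (q - 1) / 2 ≠ 0 := by omega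
  have h1 : φ ((g : Fˣ) : F) = 1 := by rw [h]; exact MulChar.one_apply_coe g
  rw [hφ, MulChar.pow_apply' T hk, ← map_pow] at h1
  have h2 := faithful T hT h1
  have h3 : (g ^ ((q - 1) / 2) : Fˣ) = 1 := by
    apply Units.ext
    push_cast
    exact h2
  have h4' := orderOf_dvd_of_pow_eq_one h3
  rw [hord] at h4'
  have := Nat.le_of_dvd (by omega) h4'
  omega

lemma phi_sum_zero (hcard : Fintype.card F = q) (hq5 : 5 ≤ q) (h4 : 4 ∣ q - 1)
    (hT : ∀ χ : MulChar F ℂ, ∃ k : ℕ, χ = T ^ k)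
    (hφ : φ = T ^ ((q - 1) / 2)) : ∑ z : F, φ z = 0 :=
  MulChar.sum_eq_zero_of_ne_one (phi_ne_one T φ hcard hq5 h4 hT hφ)

end Phi


section Key

variable {q : ℕ} (T φ : MulChar F ℂ)

open scoped Classical

lemma sum_fiber_mul (d : ℕ) (f : F → ℂ) :
    ∑ s : F, f (s ^ d) = ∑ t : F, ((Finset.univ.filter fun s : F => s ^ d = t).card : ℂ) * f t := by
  rw [← Finset.sum_fiberwise' Finset.univ (fun s : F => s ^ d) f]
  refine Finset.sum_congr rfl fun t _ => ?_
  rw [Finset.sum_const, nsmul_eq_mul]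

lemma card_fiber_zero {d : ℕ} (hd0 : d ≠ 0) :
    (Finset.univ.filter fun s : F => s ^ d = (0 : F)) = {0} := by
  ext s
  simp [pow_eq_zero_iff hd0]

variable (hcard : Fintype.card F = q) (hq5 : 5 ≤ q) (h4 : 4 ∣ q - 1)
  (hT : ∀ χ : MulChar F ℂ, ∃ k : ℕ, χ = T ^ k) (hφ : φ = T ^ ((q - 1) / 2))

include hcard hq5 h4 hT hφ

lemma card_fiber_two (t : F) :
    ((Finset.univ.filter fun s : F => s ^ 2 = t).card : ℂ) = 1 + φ t := by
  rcases eq_or_ne t 0 with rfl | ht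
  · rw [card_fiber_zero two_ne_zero, MulChar.map_zero, Finset.card_singleton]
    norm_num
  · rw [card_fiber hcard T hT ⟨(q - 1) / 2, by omega⟩ two_ne_zero (by omega) ht]
    rw [show (q - 1) / 2 = (q - 1) / 2 from rfl]
    rw [Finset.sum_range_succ, Finset.sum_range_one]
    have h2 : (q - 1) / 2 ≠ 0 := by omega
    rw [hφ, MulChar.pow_apply' T h2]
    norm_num

lemma card_fiber_four (t : F) :
    ((Finset.univ.filter fun s : F => s ^ 4 = t).card : ℂ)
      = 1 + (T ^ ((q - 1) / 4)) t + φ t + (T ^ (3 * ((q - 1) / 4))) t := by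
  have hc0 : (q - 1) / 4 ≠ 0 := by omega
  rcases eq_or_ne t 0 with rfl | ht
  · rw [card_fiber_zero four_ne_zero, Finset.card_singleton, MulChar.map_zero,
      MulChar.map_zero, MulChar.map_zero]
    norm_num
  · rw [card_fiber hcard T hT ⟨(q - 1) / 4, by omega⟩ four_ne_zero (by omega) ht,
      Finset.sum_range_succ, Finset.sum_range_succ, Finset.sum_range_succ,
      Finset.sum_range_one, hφ, MulChar.pow_apply' T (by omega : (q - 1) / 2 ≠ 0),
      MulChar.pow_apply' T hc0, MulChar.pow_apply' T (by omega : 3 * ((q - 1) / 4) ≠ 0)]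
    simp only [Nat.zero_mul, Nat.one_mul, pow_zero]
    rw [show 2 * ((q - 1) / 4) = (q - 1) / 2 from by omega]

lemma sum_phi_one_sub : ∑ t : F, φ (1 - t) = 0 := by
  have h := Equiv.sum_comp (Equiv.subLeft (1 : F)) (fun u => φ u)
  simp only [Equiv.subLeft_apply] at h
  rw [h]
  exact phi_sum_zero T φ hcard hq5 h4 hT hφ

lemma sum_phi_t_one_sub : ∑ t : F, φ (t * (1 - t)) = -1 := by
  have step : ∀ t : F, φ (t * (1 - t)) = φ (t⁻¹ - 1) - (if t = 0 then 1 else 0) := by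
    intro t
    rcases eq_or_ne t 0 with rfl | ht
    · simp [phi_neg_one T φ hcard hq5 h4 hφ, MulChar.map_zero]
    · rw [if_neg ht, sub_zero]
      have : t * (1 - t) = (t * t) * (t⁻¹ - 1) := by field_simp
      rw [this, map_mul, map_mul, phi_sq T φ hcard hq5 h4 hφ ht]
      · rw [one_mul]
  rw [Finset.sum_congr rfl fun t _ => step t, Finset.sum_sub_distrib]
  have h1 : ∑ t : F, (if t = 0 then (1 : ℂ) else 0) = 1 := by simp
  have h2 : ∑ t : F, φ (t⁻¹ - 1) = 0 := by
    have hinv : Function.Involutive (fun t : F => t⁻¹) := fun t => inv_inv t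
    have ha := Equiv.sum_comp (Function.Involutive.toPerm _ hinv) (fun u : F => φ (u⁻¹ - 1))
    simp only [Function.Involutive.coe_toPerm, inv_inv] at ha
    rw [← ha]
    have hb := Equiv.sum_comp (Equiv.subRight (1 : F)) (fun u => φ u)
    simp only [Equiv.subRight_apply] at hb
    rw [hb]
    exact phi_sum_zero T φ hcard hq5 h4 hT hφ
  rw [h1, h2, zero_sub]

lemma sum_phi_mul_one_sub : ∑ t : F, φ t * φ (1 - t) = -1 := by
  have : ∀ t : F, φ t * φ (1 - t) = φ (t * (1 - t)) := fun t => (map_mul φ _ _).symm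
  rw [Finset.sum_congr rfl fun t _ => this t]
  exact sum_phi_t_one_sub T φ hcard hq5 h4 hT hφ

lemma sum_phi_one_sub_sq : ∑ t : F, φ (1 - t ^ 2) = -1 := by
  rw [sum_fiber_mul 2 (fun u => φ (1 - u))]
  have : ∀ t : F, ((Finset.univ.filter fun s : F => s ^ 2 = t).card : ℂ) * φ (1 - t)
      = φ (1 - t) + φ t * φ (1 - t) := by
    intro t
    rw [card_fiber_two T φ hcard hq5 h4 hT hφ t]
    ring
  rw [Finset.sum_congr rfl fun t _ => this t, Finset.sum_add_distrib,
    sum_phi_one_sub T φ hcard hq5 h4 hT hφ, sum_phi_mul_one_sub T φ hcard hq5 h4 hT hφ]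
  norm_num

lemma sum_phi_one_sub_quartic :
    ∑ s : F, φ (1 - s ^ 4) = (∑ u : F, φ (u * (1 - u ^ 2))) - 1 := by
  have h1 : ∀ s : F, φ (1 - s ^ 4) = φ (1 - (s ^ 2) ^ 2) := by
    intro s; rw [show (s ^ 2) ^ 2 = s ^ 4 by ring]
  rw [Finset.sum_congr rfl fun s _ => h1 s, sum_fiber_mul 2 (fun u => φ (1 - u ^ 2))]
  have h2 : ∀ t : F, ((Finset.univ.filter fun s : F => s ^ 2 = t).card : ℂ) * φ (1 - t ^ 2)
      = φ (1 - t ^ 2) + φ (t * (1 - t ^ 2)) := by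
    intro t
    rw [card_fiber_two T φ hcard hq5 h4 hT hφ t, map_mul]
    ring
  rw [Finset.sum_congr rfl fun t _ => h2 t, Finset.sum_add_distrib,
    sum_phi_one_sub_sq T φ hcard hq5 h4 hT hφ]
  ring

/-- The main quartic-side identity. -/
lemma key_quartic :
    ∑ t : F, ((T ^ ((q - 1) / 4)) t + (T ^ (3 * ((q - 1) / 4))) t) * φ (1 - t)
      = ∑ u : F, φ (u * (1 - u ^ 2)) := by
  have hpt : ∀ t : F, ((T ^ ((q - 1) / 4)) t + (T ^ (3 * ((q - 1) / 4))) t) * φ (1 - t)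
      = ((Finset.univ.filter fun s : F => s ^ 4 = t).card : ℂ) * φ (1 - t)
        - φ (1 - t) - φ t * φ (1 - t) := by
    intro t
    rw [card_fiber_four T φ hcard hq5 h4 hT hφ t]
    ring
  rw [Finset.sum_congr rfl fun t _ => hpt t, Finset.sum_sub_distrib, Finset.sum_sub_distrib,
    ← sum_fiber_mul 4 (fun u => φ (1 - u)),
    sum_phi_one_sub T φ hcard hq5 h4 hT hφ, sum_phi_mul_one_sub T φ hcard hq5 h4 hT hφ,
    sum_phi_one_sub_quartic T φ hcard hq5 h4 hT hφ]
  ring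

/-- The elliptic-curve-side identity. -/
lemma key_cubic :
    ∑ x : F, φ (x * (x - 1) * (x - 2)⁻¹) = ∑ u : F, φ (u * (1 - u ^ 2)) := by
  have h1 : ∀ x : F, φ (x * (x - 1) * (x - 2)⁻¹) = φ (x * (x - 1) * (x - 2)) := by
    intro x
    rw [map_mul, map_mul, phi_inv T φ hcard hq5 h4 hφ, ← map_mul, ← map_mul]
  rw [Finset.sum_congr rfl fun x _ => h1 x]
  have h := Equiv.sum_comp (Equiv.subLeft (1 : F)) (fun x => φ (x * (x - 1) * (x - 2)))
  simp only [Equiv.subLeft_apply] at h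
  rw [← h]
  refine Finset.sum_congr rfl fun u _ => ?_
  congr 1
  ring

lemma phi_inv_char : φ⁻¹ = φ := by
  have hmul : φ * φ = 1 := by
    apply MulChar.ext
    intro a
    rw [MulChar.mul_apply, phi_sq T φ hcard hq5 h4 hφ a.ne_zero, MulChar.one_apply_coe]
  exact inv_eq_of_mul_eq_one_right hmul

lemma phi_neg_two : φ (-2) = φ 2 := by
  have : (-2 : F) = (-1) * 2 := by ring
  rw [this, map_mul, phi_neg_one T φ hcard hq5 h4 hφ, one_mul]

lemma rhs_eval :
    φ (-2) * (greeneBinom F (T ^ ((q - 1) / 4)) φ + greeneBinom F (T ^ (3 * (q - 1) / 4)) φ)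
      = φ 2 / q * ∑ t : F, ((T ^ ((q - 1) / 4)) t + (T ^ (3 * ((q - 1) / 4))) t) * φ (1 - t) := by
  have h34 : 3 * (q - 1) / 4 = 3 * ((q - 1) / 4) := by omega
  rw [h34]
  unfold greeneBinom
  rw [hcard, phi_inv_char T φ hcard hq5 h4 hT hφ, phi_neg_one T φ hcard hq5 h4 hφ,
    phi_neg_two T φ hcard hq5 h4 hT hφ]
  unfold jacobiSum
  simp only [mul_add, Finset.mul_sum]
  rw [← Finset.sum_add_distrib]
  refine Finset.sum_congr rfl fun t _ => ?_
  ring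

end Key

section LHS

open scoped Classical

variable {q : ℕ} (T φ : MulChar F ℂ)
variable (hcard : Fintype.card F = q) (hq5 : 5 ≤ q) (h4 : 4 ∣ q - 1)
  (hT : ∀ χ : MulChar F ℂ, ∃ k : ℕ, χ = T ^ k) (hφ : φ = T ^ ((q - 1) / 2))
  (h2F : (2 : F) ≠ 0)

include hcard hq5 h4 hT hφ h2F

lemma lhs_eval :
    hyp2F1 F q T φ φ 1 ((2 : F)⁻¹)
      = φ 2 / q * ∑ x : F, φ (x * (x - 1) * (x - 2)⁻¹) := by
  have hq0 : (q : ℂ) ≠ 0 := Nat.cast_ne_zero.mpr (by omega)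
  have hq1 : (q : ℂ) - 1 ≠ 0 := sub_ne_zero.mpr (Nat.cast_ne_one.mpr (by omega))
  unfold hyp2F1
  have hterm : ∀ m : ℕ,
      greeneBinom F (φ * T ^ m) (T ^ m) * greeneBinom F (φ * T ^ m) (1 * T ^ m)
          * (T ^ m) ((2 : F)⁻¹)
        = 1 / (q : ℂ) ^ 2 * ∑ x : F, ∑ y : F,
            φ (x * y) * (T ^ m) (x * (1 - x)⁻¹ * y * (1 - y)⁻¹ * 2⁻¹) := by
    intro m
    set χ := T ^ m with hχ
    rw [one_mul]
    unfold greeneBinom jacobiSum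
    rw [hcard]
    have hpt : ∀ x : F, (φ * χ) x * χ⁻¹ (1 - x) = φ x * χ (x * (1 - x)⁻¹) := by
      intro x
      rw [MulChar.mul_apply, MulChar.inv_apply', map_mul]
      ring
    rw [Finset.sum_congr rfl fun x _ => hpt x]
    have hm1 : χ (-1) * χ (-1) = 1 := by
      rw [← map_mul]
      norm_num
    set S := ∑ x : F, φ x * χ (x * (1 - x)⁻¹) with hS
    have hSS : S * S * χ (2 : F)⁻¹ = ∑ x : F, ∑ y : F,
        φ (x * y) * χ (x * (1 - x)⁻¹ * y * (1 - y)⁻¹ * 2⁻¹) := by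
      rw [hS, Finset.sum_mul_sum, Finset.sum_mul]
      refine Finset.sum_congr rfl fun x _ => ?_
      rw [Finset.sum_mul]
      refine Finset.sum_congr rfl fun y _ => ?_
      simp only [map_mul]
      ring
    have e1 : χ (-1) / (q : ℂ) * S * (χ (-1) / (q : ℂ) * S) * χ (2 : F)⁻¹
        = (χ (-1) * χ (-1)) * (S * S * χ (2 : F)⁻¹) / (q : ℂ) ^ 2 := by ring
    rw [e1, hm1, one_mul, hSS]
    ring
  rw [Finset.sum_congr rfl fun m _ => hterm m, ← Finset.mul_sum]
  have hswap : ∑ m ∈ Finset.range (q - 1), ∑ x : F, ∑ y : F,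
      φ (x * y) * (T ^ m) (x * (1 - x)⁻¹ * y * (1 - y)⁻¹ * 2⁻¹)
      = ∑ x : F, ∑ y : F, φ (x * y) *
          (if x * (1 - x)⁻¹ * y * (1 - y)⁻¹ * 2⁻¹ = 1 then ((q - 1 : ℕ) : ℂ) else 0) := by
    rw [Finset.sum_comm]
    refine Finset.sum_congr rfl fun x _ => ?_
    rw [Finset.sum_comm]
    refine Finset.sum_congr rfl fun y _ => ?_
    rw [← Finset.mul_sum, orth hcard T hT]
  rw [hswap]
  have hY : ∀ x : F, ∑ y : F, φ (x * y) *
      (if x * (1 - x)⁻¹ * y * (1 - y)⁻¹ * 2⁻¹ = 1 then ((q - 1 : ℕ) : ℂ) else 0)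
      = φ (x * ((2 * x - 2) * (x - 2)⁻¹)) * ((q - 1 : ℕ) : ℂ) := by
    intro x
    rcases eq_or_ne x 0 with rfl | hx0
    · conv_rhs => rw [zero_mul, MulChar.map_zero, zero_mul]
      refine Finset.sum_eq_zero fun y _ => ?_
      rw [zero_mul, MulChar.map_zero, zero_mul]
    rcases eq_or_ne x 1 with rfl | hx1
    · have hr : φ ((1 : F) * ((2 * 1 - 2) * ((1 : F) - 2)⁻¹)) = 0 := by
        norm_num [MulChar.map_zero]
      rw [hr, zero_mul]
      exact Finset.sum_eq_zero fun y _ => by simp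
    rcases eq_or_ne x 2 with rfl | hx2
    · have hr : ((2 : F) - 2)⁻¹ = 0 := by rw [sub_self, inv_zero]
      conv_rhs => rw [hr, mul_zero, mul_zero, MulChar.map_zero, zero_mul]
      refine Finset.sum_eq_zero fun y _ => ?_
      rw [if_neg, mul_zero]
      intro h
      have hy1 : y ≠ 1 := by rintro rfl; simp at h
      have h1y : (1 : F) - y ≠ 0 := sub_ne_zero.mpr (Ne.symm hy1)
      rw [show (1 : F) - 2 = -1 from by ring] at h
      field_simp at h
      exact h2F (by linear_combination -2 * h)
    · have h1x : (1 : F) - x ≠ 0 := sub_ne_zero.mpr (Ne.symm hx1)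
      have hx2' : x - 2 ≠ 0 := sub_ne_zero.mpr hx2
      have hiff : ∀ y : F, (x * (1 - x)⁻¹ * y * (1 - y)⁻¹ * 2⁻¹ = 1)
          ↔ y = (2 * x - 2) * (x - 2)⁻¹ := by
        intro y
        constructor
        · intro h
          have hy1 : y ≠ 1 := by rintro rfl; simp at h
          have h1y : (1 : F) - y ≠ 0 := sub_ne_zero.mpr (Ne.symm hy1)
          field_simp at h ⊢
          linear_combination -h
        · rintro rfl
          have hy1 : (1 : F) - (2 * x - 2) * (x - 2)⁻¹ ≠ 0 := by
            intro h
            apply hx0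
            have h2 : ((1 : F) - (2 * x - 2) * (x - 2)⁻¹) * (x - 2) = 0 := by rw [h, zero_mul]
            field_simp at h2
            linear_combination -h2
          field_simp
          have hx' : x - 2 * x ≠ 0 := fun hh => hx0 (by linear_combination -hh)
          rw [div_eq_iff (fun hh => hx0 (by linear_combination -hh))]
          ring
      rw [Finset.sum_congr rfl fun y _ => by rw [if_congr (hiff y) rfl rfl]]
      simp only [mul_ite, mul_zero]
      rw [Finset.sum_ite_eq' Finset.univ ((2 * x - 2) * (x - 2)⁻¹)
        (fun y => φ (x * y) * ((q - 1 : ℕ) : ℂ))]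
      simp
  rw [Finset.sum_congr rfl fun x _ => hY x]
  have hptx : ∀ x : F, φ (x * ((2 * x - 2) * (x - 2)⁻¹)) * ((q - 1 : ℕ) : ℂ)
      = (φ 2 * ((q - 1 : ℕ) : ℂ)) * φ (x * (x - 1) * (x - 2)⁻¹) := by
    intro x
    rw [show x * ((2 * x - 2) * (x - 2)⁻¹) = 2 * (x * (x - 1) * (x - 2)⁻¹) from by ring,
      map_mul]
    ring
  rw [Finset.sum_congr rfl fun x _ => hptx x, ← Finset.mul_sum]
  have hc : ((q - 1 : ℕ) : ℂ) = (q : ℂ) - 1 := by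
    rw [Nat.cast_sub (by omega : 1 ≤ q)]
    norm_num
  rw [hc]
  field_simp

end LHS

end Hyp2F1Aux

/-- For `q ≡ 1 (mod 4)`,
`₂F₁(φ, φ; ε | 1/2) = φ(-2)·[binom(T^{(q-1)/4}, φ) + binom(T^{3(q-1)/4}, φ)]`. -/
theorem hyp2F1_half_value (F : Type) [Field F] [Fintype F] (q : ℕ)
    (hcard : Fintype.card F = q) (hq : IsPrimePow q) (h4 : 4 ∣ q - 1)
    (T : MulChar F ℂ) (hT : ∀ χ : MulChar F ℂ, ∃ k : ℕ, χ = T ^ k)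
    (φ : MulChar F ℂ) (hφ : φ = T ^ ((q - 1) / 2)) :
    hyp2F1 F q T φ φ 1 ((2 : F)⁻¹)
      = φ (-2) * (greeneBinom F (T ^ ((q - 1) / 4)) φ
          + greeneBinom F (T ^ (3 * (q - 1) / 4)) φ) := by
  have hq5 := Hyp2F1Aux.q_ge_five hq h4
  have h2F := Hyp2F1Aux.two_ne_zero' hcard h4 hq
  rw [Hyp2F1Aux.lhs_eval T φ hcard hq5 h4 hT hφ h2F,
    Hyp2F1Aux.rhs_eval T φ hcard hq5 h4 hT hφ,
    Hyp2F1Aux.key_quartic T φ hcard hq5 h4 hT hφ,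
    Hyp2F1Aux.key_cubic T φ hcard hq5 h4 hT hφ]
end
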